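/- Let G be a connected weighted graph and s,t vertices. Let u₁ and u₂ be vertices on π(s,t) with u₁ appearing no later than u₂ along the path from s to t, and let v₁, v₂ be vertices joined in G to u₁ and u₂ respectively by edges of weight at most W(s,t). Then d_G(s,u₁) + w(u₁v₁) + d_G(v₁,v₂) + w(u₂v₂) + d_G(u₂,t) ≤ d_G(s,t) + 4·W(s,t). In particular, if a subgraph H contains shortest paths of G from s to u₁, from v₁ to v₂, and from u₂ to t together with the edges u₁v₁ and u₂v₂, then d_H(s,t) ≤ d_G(s,t) + 4·W(s,t). -/

import Mathlib

open scoped ENNReal Classical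

/-- The total weight of a walk: the sum of the weights of its edges. -/
noncomputable def walkWeight {V : Type} (G : SimpleGraph V) (w : Sym2 V → ℝ≥0∞)
    {s t : V} (p : G.Walk s t) : ℝ≥0∞ :=
  (p.edges.map w).sum

/-- Shortest-path distance in the weighted graph `(G, w)`, equal to `⊤` if there is no path. -/
noncomputable def gdist {V : Type} (G : SimpleGraph V) (w : Sym2 V → ℝ≥0∞)
    (s t : V) : ℝ≥0∞ :=
  ⨅ p : G.Walk s t, walkWeight G w p

/-- The maximum edge weight along a walk (0 for the trivial walk). -/
noncomputable def maxEdge {V : Type} (G : SimpleGraph V) (w : Sym2 V → ℝ≥0∞)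
    {s t : V} (p : G.Walk s t) : ℝ≥0∞ :=
  (p.edges.map w).foldr max 0

/-- `π` assigns to each ordered vertex pair a shortest path: a walk whose total
weight equals the shortest-path distance. -/
def IsShortestPathScheme {V : Type} (G : SimpleGraph V) (w : Sym2 V → ℝ≥0∞)
    (π : (s t : V) → G.Walk s t) : Prop :=
  ∀ s t : V, walkWeight G w (π s t) = gdist G w s t

/-- The edge weights are positive and finite on all edges of `G`. -/
def PosWeights {V : Type} (G : SimpleGraph V) (w : Sym2 V → ℝ≥0∞) : Prop :=
  ∀ e ∈ G.edgeSet, 0 < w e ∧ w e ≠ ⊤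

lemma walkWeight_append {V : Type} (G : SimpleGraph V) (w : Sym2 V → ℝ≥0∞)
    {a b c : V} (p : G.Walk a b) (q : G.Walk b c) :
    walkWeight G w (p.append q) = walkWeight G w p + walkWeight G w q := by
  simp [walkWeight, SimpleGraph.Walk.edges_append]

lemma gdist_le_walkWeight {V : Type} (G : SimpleGraph V) (w : Sym2 V → ℝ≥0∞)
    {a b : V} (p : G.Walk a b) : gdist G w a b ≤ walkWeight G w p :=
  iInf_le _ p

lemma gdist_triangle {V : Type} (G : SimpleGraph V) (w : Sym2 V → ℝ≥0∞)
    (a b c : V) : gdist G w a c ≤ gdist G w a b + gdist G w b c := by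
  simp only [gdist]
  rw [ENNReal.iInf_add]
  refine le_iInf fun p => ?_
  rw [ENNReal.add_iInf]
  refine le_iInf fun q => ?_
  calc gdist G w a c ≤ walkWeight G w (p.append q) := gdist_le_walkWeight G w _
    _ = _ := walkWeight_append G w p q

lemma gdist_le_edge {V : Type} (G : SimpleGraph V) (w : Sym2 V → ℝ≥0∞)
    {a b : V} (h : G.Adj a b) : gdist G w a b ≤ w s(a, b) := by
  have := gdist_le_walkWeight G w (SimpleGraph.Walk.cons h SimpleGraph.Walk.nil)
  simpa [walkWeight] using this

/-- Let `u₁, u₂` lie in this order on `π(s,t)`, and let `v₁, v₂` be joined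
in `G` to `u₁, u₂` respectively by edges of weight at most `W(s,t)`. Then
`d_G(s,u₁) + w(u₁v₁) + d_G(v₁,v₂) + w(u₂v₂) + d_G(u₂,t) ≤ d_G(s,t) + 4·W(s,t)`.
In particular, if a subgraph `H` contains shortest paths of `G` from `s` to `u₁`, from `v₁`
to `v₂` and from `u₂` to `t`, together with the edges `u₁v₁` and `u₂v₂`, then
`d_H(s,t) ≤ d_G(s,t) + 4·W(s,t)`. -/
theorem detour_four_W
    (V : Type) [Fintype V] (G : SimpleGraph V) (w : Sym2 V → ℝ≥0∞)
    (hconn : G.Connected) (hw : PosWeights G w)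
    (π : (s t : V) → G.Walk s t) (hπ : IsShortestPathScheme G w π)
    (s t u₁ u₂ v₁ v₂ : V)
    (p₁ : G.Walk s u₁) (p₂ : G.Walk u₁ u₂) (p₃ : G.Walk u₂ t)
    (horder : π s t = p₁.append (p₂.append p₃))
    (hv₁ : G.Adj u₁ v₁) (hwv₁ : w s(u₁, v₁) ≤ maxEdge G w (π s t))
    (hv₂ : G.Adj u₂ v₂) (hwv₂ : w s(u₂, v₂) ≤ maxEdge G w (π s t)) :
    gdist G w s u₁ + w s(u₁, v₁) + gdist G w v₁ v₂ + w s(u₂, v₂) + gdist G w u₂ t ≤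
        gdist G w s t + 4 * maxEdge G w (π s t) ∧
      ∀ H : SimpleGraph V, H ≤ G →
        H.Adj u₁ v₁ → H.Adj u₂ v₂ →
        gdist H w s u₁ ≤ gdist G w s u₁ →
        gdist H w v₁ v₂ ≤ gdist G w v₁ v₂ →
        gdist H w u₂ t ≤ gdist G w u₂ t →
        gdist H w s t ≤ gdist G w s t + 4 * maxEdge G w (π s t) := by
  set W := maxEdge G w (π s t) with hW
  have hsum : walkWeight G w p₁ + (walkWeight G w p₂ + walkWeight G w p₃) = gdist G w s t := by
    rw [← hπ s t, horder, walkWeight_append, walkWeight_append]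
  have h1 : gdist G w s u₁ ≤ walkWeight G w p₁ := gdist_le_walkWeight G w p₁
  have h3 : gdist G w u₂ t ≤ walkWeight G w p₃ := gdist_le_walkWeight G w p₃
  have h2 : gdist G w v₁ v₂ ≤ W + walkWeight G w p₂ + W := by
    calc gdist G w v₁ v₂ ≤ gdist G w v₁ u₁ + gdist G w u₁ v₂ :=
          gdist_triangle G w _ _ _
      _ ≤ gdist G w v₁ u₁ + (gdist G w u₁ u₂ + gdist G w u₂ v₂) := by
          exact add_le_add_right (gdist_triangle G w _ _ _) _
      _ ≤ W + (walkWeight G w p₂ + W) := by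
          refine add_le_add ?_ (add_le_add (gdist_le_walkWeight G w p₂) ?_)
          · calc gdist G w v₁ u₁ ≤ w s(v₁, u₁) := gdist_le_edge G w hv₁.symm
              _ = w s(u₁, v₁) := by rw [Sym2.eq_swap]
              _ ≤ W := hwv₁
          · exact le_trans (gdist_le_edge G w hv₂) hwv₂
      _ = W + walkWeight G w p₂ + W := by ring
  have main : gdist G w s u₁ + w s(u₁, v₁) + gdist G w v₁ v₂ + w s(u₂, v₂) + gdist G w u₂ t ≤
      gdist G w s t + 4 * W := by
    calc gdist G w s u₁ + w s(u₁, v₁) + gdist G w v₁ v₂ + w s(u₂, v₂) + gdist G w u₂ t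
        ≤ walkWeight G w p₁ + W + (W + walkWeight G w p₂ + W) + W + walkWeight G w p₃ := by
          exact add_le_add (add_le_add (add_le_add (add_le_add h1 hwv₁) h2) hwv₂) h3
      _ = walkWeight G w p₁ + (walkWeight G w p₂ + walkWeight G w p₃) + 4 * W := by ring
      _ = gdist G w s t + 4 * W := by rw [hsum]
  refine ⟨main, fun H _ hH1 hH2 ha hb hc => ?_⟩
  have tH : gdist H w s t ≤ gdist H w s u₁ + w s(u₁, v₁) + gdist H w v₁ v₂ + w s(u₂, v₂) +
      gdist H w u₂ t := by
    calc gdist H w s t ≤ gdist H w s u₂ + gdist H w u₂ t := gdist_triangle H w _ _ _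
      _ ≤ gdist H w s v₂ + gdist H w v₂ u₂ + gdist H w u₂ t := by
          exact add_le_add_left (gdist_triangle H w _ _ _) _
      _ ≤ gdist H w s v₁ + gdist H w v₁ v₂ + gdist H w v₂ u₂ + gdist H w u₂ t := by
          exact add_le_add_left (add_le_add_left (gdist_triangle H w _ _ _) _) _
      _ ≤ gdist H w s u₁ + gdist H w u₁ v₁ + gdist H w v₁ v₂ + gdist H w v₂ u₂ +
            gdist H w u₂ t := by
          exact add_le_add_left (add_le_add_left (add_le_add_left
            (gdist_triangle H w _ _ _) _) _) _
      _ ≤ gdist H w s u₁ + w s(u₁, v₁) + gdist H w v₁ v₂ + w s(u₂, v₂) + gdist H w u₂ t := by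
          refine add_le_add (add_le_add (add_le_add
            (add_le_add le_rfl (gdist_le_edge H w hH1)) le_rfl) ?_) le_rfl
          calc gdist H w v₂ u₂ ≤ w s(v₂, u₂) := gdist_le_edge H w hH2.symm
            _ = w s(u₂, v₂) := by rw [Sym2.eq_swap]
  refine le_trans tH (le_trans ?_ main)
  exact add_le_add (add_le_add (add_le_add (add_le_add ha le_rfl) hb) le_rfl) hc
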